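/- Let K ≥ 1, let m_1, …, m_K ≥ 1 be integers, and let φ : {0,1}^{m_1} × ⋯ × {0,1}^{m_K} → {0,1} be monotone (nondecreasing in each binary coordinate). For l_k ∈ {0,…,m_k}, define the survival signature Φ(l_1,…,l_K) = [∏_{k=1}^K C(m_k, l_k)]^{-1} · Σ φ(x), where the sum ranges over all state vectors x whose type-k block has exactly l_k entries equal to 1, for each k. Then Φ is nondecreasing in each of its arguments l_1, …, l_K. -/

import Mathlib

open Finset

private lemma count_update_true {n : ℕ} (f : Fin n → Bool) (i : Fin n) (hf : f i = false) :
    (Finset.univ.filter (fun j => Function.update f i true j = true)).card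
      = (Finset.univ.filter (fun j => f j = true)).card + 1 := by
  have h : Finset.univ.filter (fun j => Function.update f i true j = true)
      = insert i (Finset.univ.filter (fun j => f j = true)) := by
    ext j
    by_cases hj : j = i
    · subst hj; simp [hf]
    · simp [Function.update_of_ne hj, hj]
  rw [h, Finset.card_insert_of_notMem (by simp [hf])]

private lemma count_false {n : ℕ} (f : Fin n → Bool) :
    (Finset.univ.filter (fun j => f j = false)).card
      = n - (Finset.univ.filter (fun j => f j = true)).card := by
  have hsplit := Finset.card_filter_add_card_filter_not
    (s := (Finset.univ : Finset (Fin n))) (p := fun j => f j = true)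
  have heq : (Finset.univ.filter (fun j : Fin n => ¬ f j = true))
      = Finset.univ.filter (fun j => f j = false) := by
    apply Finset.filter_congr; intro j _; simp
  rw [heq, Finset.card_univ, Fintype.card_fin] at hsplit
  omega


private lemma update_update_false {n : ℕ} (f : Fin n → Bool) (i : Fin n) (hf : f i = false) :
    Function.update (Function.update f i true) i false = f := by
  funext j
  by_cases hj : j = i
  · subst hj; simp [hf]
  · simp [Function.update_of_ne hj]

private lemma step_count {K : ℕ} {m : Fin K → ℕ}
    (φ : ((k : Fin K) → (Fin (m k) → Bool)) → Bool)
    (hφ : ∀ x y : (k : Fin K) → Fin (m k) → Bool, (∀ k i, x k i ≤ y k i) → φ x ≤ φ y)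
    (k0 : Fin K) (l : Fin K → ℕ) :
    (m k0 - l k0) *
      (Finset.univ.filter (fun x : (k : Fin K) → Fin (m k) → Bool =>
        (∀ k, (Finset.univ.filter (fun i => x k i = true)).card = l k) ∧ φ x = true)).card
    ≤ (l k0 + 1) *
      (Finset.univ.filter (fun x : (k : Fin K) → Fin (m k) → Bool =>
        (∀ k, (Finset.univ.filter (fun i => x k i = true)).card
           = Function.update l k0 (l k0 + 1) k) ∧ φ x = true)).card := by
  classical
  set A := Finset.univ.filter (fun x : (k : Fin K) → Fin (m k) → Bool =>
        (∀ k, (Finset.univ.filter (fun i => x k i = true)).card = l k) ∧ φ x = true) with hA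
  set B := Finset.univ.filter (fun x : (k : Fin K) → Fin (m k) → Bool =>
        (∀ k, (Finset.univ.filter (fun i => x k i = true)).card
           = Function.update l k0 (l k0 + 1) k) ∧ φ x = true) with hB
  set s := (A ×ˢ (Finset.univ : Finset (Fin (m k0)))).filter
      (fun p => p.1 k0 p.2 = false) with hs_def
  set t := (B ×ˢ (Finset.univ : Finset (Fin (m k0)))).filter
      (fun p => p.1 k0 p.2 = true) with ht_def
  have hsc : s.card = (m k0 - l k0) * A.card := by
    rw [hs_def, Finset.card_filter, Finset.sum_product]
    have hcongr : ∀ x ∈ A, (∑ i : Fin (m k0), if x k0 i = false then (1:ℕ) else 0)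
        = m k0 - l k0 := by
      intro x hx
      rw [← Finset.card_filter]
      have hx' := (Finset.mem_filter.mp hx).2.1 k0
      rw [count_false, hx']
    rw [Finset.sum_congr rfl hcongr, Finset.sum_const, smul_eq_mul, mul_comm]
  have htc : t.card = (l k0 + 1) * B.card := by
    rw [ht_def, Finset.card_filter, Finset.sum_product]
    have hcongr : ∀ y ∈ B, (∑ i : Fin (m k0), if y k0 i = true then (1:ℕ) else 0)
        = l k0 + 1 := by
      intro y hy
      rw [← Finset.card_filter]
      have hy' := (Finset.mem_filter.mp hy).2.1 k0
      rw [hy', Function.update_self]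
    rw [Finset.sum_congr rfl hcongr, Finset.sum_const, smul_eq_mul, mul_comm]
  have hinj : s.card ≤ t.card := by
    apply Finset.card_le_card_of_injOn
      (fun p => (Function.update p.1 k0 (Function.update (p.1 k0) p.2 true), p.2))
    · intro p hp
      obtain ⟨hpA, hpf⟩ := Finset.mem_filter.mp hp
      obtain ⟨hxA, -⟩ := Finset.mem_product.mp hpA
      obtain ⟨-, hcnt, hφx⟩ := Finset.mem_filter.mp hxA
      set y := Function.update p.1 k0 (Function.update (p.1 k0) p.2 true) with hy
      have hmono : ∀ k i, p.1 k i ≤ y k i := by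
        intro k i
        by_cases hk : k = k0
        · subst hk
          rw [hy, Function.update_self]
          by_cases hi : i = p.2
          · subst hi; rw [Function.update_self]; exact Bool.le_true _
          · rw [Function.update_of_ne hi]
        · rw [hy, Function.update_of_ne hk]
      refine Finset.mem_filter.mpr ⟨Finset.mem_product.mpr ⟨?_, Finset.mem_univ _⟩, ?_⟩
      · refine Finset.mem_filter.mpr ⟨Finset.mem_univ _, ?_, ?_⟩
        · intro k
          by_cases hk : k = k0
          · subst hk
            beta_reduce
            simp only [Function.update_self]
            rw [count_update_true _ _ hpf, hcnt k]
          · simp [hy, Function.update_of_ne hk, hcnt k]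
        · have h1 := hφ p.1 y hmono
          rw [hφx] at h1
          exact le_antisymm (Bool.le_true _) h1
      · simp [hy]
    · intro p hp q hq hpq
      obtain ⟨hpA, hpf⟩ := Finset.mem_filter.mp hp
      obtain ⟨hqA, hqf⟩ := Finset.mem_filter.mp hq
      simp only [Prod.mk.injEq] at hpq
      obtain ⟨h1', h2⟩ := hpq
      have h1 : p.1 = q.1 := by
        funext k
        by_cases hk : k = k0
        · subst hk
          have hk0 := congrFun h1' k
          rw [Function.update_self, Function.update_self] at hk0
          rw [← h2] at hk0 hqf
          have h3 := congrArg (fun g => Function.update g p.2 false) hk0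
          beta_reduce at h3
          rwa [update_update_false _ _ hpf, update_update_false _ _ hqf] at h3
        · have hk' := congrFun h1' k
          rwa [Function.update_of_ne hk, Function.update_of_ne hk] at hk'
      exact Prod.ext h1 h2
  rwa [hsc, htc] at hinj

private lemma step_real {K : ℕ} {m : Fin K → ℕ}
    (φ : ((k : Fin K) → (Fin (m k) → Bool)) → Bool)
    (hφ : ∀ x y : (k : Fin K) → Fin (m k) → Bool, (∀ k i, x k i ≤ y k i) → φ x ≤ φ y)
    (k0 : Fin K) (l : Fin K → ℕ) (hl : ∀ k, l k ≤ m k) (h0 : l k0 < m k0) :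
    (∏ k, ((m k).choose (l k) : ℝ))⁻¹ *
        ∑ x : (k : Fin K) → Fin (m k) → Bool,
          (if (∀ k, (Finset.univ.filter (fun i => x k i = true)).card = l k) ∧ φ x = true
            then (1 : ℝ) else 0) ≤
      (∏ k, ((m k).choose (Function.update l k0 (l k0 + 1) k) : ℝ))⁻¹ *
        ∑ x : (k : Fin K) → Fin (m k) → Bool,
          (if (∀ k, (Finset.univ.filter (fun i => x k i = true)).card
                = Function.update l k0 (l k0 + 1) k) ∧ φ x = true
            then (1 : ℝ) else 0) := by
  classical
  rw [Finset.sum_boole, Finset.sum_boole]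
  set NA := (Finset.univ.filter (fun x : (k : Fin K) → Fin (m k) → Bool =>
        (∀ k, (Finset.univ.filter (fun i => x k i = true)).card = l k) ∧ φ x = true)).card
  set NB := (Finset.univ.filter (fun x : (k : Fin K) → Fin (m k) → Bool =>
        (∀ k, (Finset.univ.filter (fun i => x k i = true)).card
           = Function.update l k0 (l k0 + 1) k) ∧ φ x = true)).card
  have hstep : (m k0 - l k0) * NA ≤ (l k0 + 1) * NB := step_count φ hφ k0 l
  set c := (m k0).choose (l k0) with hc
  set c' := (m k0).choose (l k0 + 1) with hc'
  set P := ∏ k ∈ Finset.univ.erase k0, (m k).choose (l k) with hP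
  have hcpos : 0 < c := Nat.choose_pos (hl k0)
  have hc'pos : 0 < c' := Nat.choose_pos h0
  have hPpos : 0 < P := Finset.prod_pos (fun k _ => Nat.choose_pos (hl k))
  have hprodN : (∏ k, (m k).choose (l k)) = c * P :=
    (Finset.mul_prod_erase Finset.univ (fun k => (m k).choose (l k))
      (Finset.mem_univ k0)).symm
  have hprod'N : (∏ k, (m k).choose (Function.update l k0 (l k0 + 1) k)) = c' * P := by
    rw [← Finset.mul_prod_erase Finset.univ
      (fun k => (m k).choose (Function.update l k0 (l k0 + 1) k)) (Finset.mem_univ k0)]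
    rw [Function.update_self]
    congr 1
    apply Finset.prod_congr rfl
    intro k hk
    rw [Function.update_of_ne (Finset.ne_of_mem_erase hk)]
  have hprod : (∏ k, ((m k).choose (l k) : ℝ)) = ((c * P : ℕ) : ℝ) := by
    rw [← Nat.cast_prod, hprodN]
  have hprod' : (∏ k, ((m k).choose (Function.update l k0 (l k0 + 1) k) : ℝ))
      = ((c' * P : ℕ) : ℝ) := by
    rw [← Nat.cast_prod, hprod'N]
  have hkey : c' * NA ≤ c * NB := by
    have h1 : (l k0 + 1) * (c' * NA) ≤ (l k0 + 1) * (c * NB) := by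
      calc (l k0 + 1) * (c' * NA) = (c' * (l k0 + 1)) * NA := by ring
        _ = (c * (m k0 - l k0)) * NA := by rw [Nat.choose_succ_right_eq]
        _ = c * ((m k0 - l k0) * NA) := by ring
        _ ≤ c * ((l k0 + 1) * NB) := Nat.mul_le_mul_left c hstep
        _ = (l k0 + 1) * (c * NB) := by ring
    exact Nat.le_of_mul_le_mul_left h1 (Nat.succ_pos _)
  rw [hprod, hprod', inv_mul_eq_div, inv_mul_eq_div]
  rw [div_le_div_iff₀ (by positivity) (by positivity)]
  have : (NA : ℝ) * (c' * P) ≤ (NB : ℝ) * (c * P) := by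
    have hn : NA * (c' * P) ≤ NB * (c * P) := by
      calc NA * (c' * P) = (c' * NA) * P := by ring
        _ ≤ (c * NB) * P := Nat.mul_le_mul_right P hkey
        _ = NB * (c * P) := by ring
    exact_mod_cast hn
  exact_mod_cast this

/-- The survival signature
`Φ(l₁,…,l_K) = [∏ₖ C(mₖ, lₖ)]⁻¹ · Σ_{x : type-k block has exactly lₖ ones} φ(x)`
of a coherent system (i.e. with monotone structure function `φ`) is nondecreasing in each of
its arguments `l₁, …, l_K`. -/
theorem survivalSignature_monotone (K : ℕ) (hK : 1 ≤ K) (m : Fin K → ℕ) (hm : ∀ k, 1 ≤ m k)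
    (φ : ((k : Fin K) → (Fin (m k) → Bool)) → Bool)
    (hφ : ∀ x y : (k : Fin K) → Fin (m k) → Bool, (∀ k i, x k i ≤ y k i) → φ x ≤ φ y) :
    ∀ l l' : (k : Fin K) → ℕ, (∀ k, l k ≤ l' k) → (∀ k, l' k ≤ m k) →
      (∏ k, ((m k).choose (l k) : ℝ))⁻¹ *
          ∑ x : (k : Fin K) → Fin (m k) → Bool,
            (if (∀ k, (Finset.univ.filter (fun i => x k i = true)).card = l k) ∧ φ x = true
              then (1 : ℝ) else 0) ≤
        (∏ k, ((m k).choose (l' k) : ℝ))⁻¹ *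
          ∑ x : (k : Fin K) → Fin (m k) → Bool,
            (if (∀ k, (Finset.univ.filter (fun i => x k i = true)).card = l' k) ∧ φ x = true
              then (1 : ℝ) else 0) := by
  intro l l' hll' hl'm
  obtain ⟨n, hn⟩ : ∃ n, ∑ k, (l' k - l k) = n := ⟨_, rfl⟩
  induction n generalizing l with
  | zero =>
    have hle : l = l' := by
      funext k
      have h0 := Finset.sum_eq_zero_iff.mp hn k (Finset.mem_univ k)
      have := hll' k
      omega
    rw [hle]
  | succ n ih =>
    have hne : ∃ k0, l k0 < l' k0 := by
      by_contra h
      push_neg at h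
      have h0 : ∑ k, (l' k - l k) = 0 := Finset.sum_eq_zero (fun k _ => by
        have := h k; omega)
      omega
    obtain ⟨k0, hk0⟩ := hne
    have h1 : ∀ k, Function.update l k0 (l k0 + 1) k ≤ l' k := by
      intro k
      by_cases hk : k = k0
      · subst hk; rw [Function.update_self]; omega
      · rw [Function.update_of_ne hk]; exact hll' k
    have h2 : ∑ k, (l' k - Function.update l k0 (l k0 + 1) k) = n := by
      have ha := Finset.add_sum_erase Finset.univ (fun k => l' k - l k) (Finset.mem_univ k0)
      have hb := Finset.add_sum_erase Finset.univ
        (fun k => l' k - Function.update l k0 (l k0 + 1) k) (Finset.mem_univ k0)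
      have hcongr : ∑ k ∈ Finset.univ.erase k0, (l' k - Function.update l k0 (l k0 + 1) k)
          = ∑ k ∈ Finset.univ.erase k0, (l' k - l k) := by
        apply Finset.sum_congr rfl
        intro k hk
        rw [Function.update_of_ne (Finset.ne_of_mem_erase hk)]
      rw [hcongr] at hb
      simp only [Function.update_self] at hb
      have ha' : l' k0 - l k0 + ∑ k ∈ Finset.univ.erase k0, (l' k - l k)
          = ∑ k, (l' k - l k) := ha
      have hb' : l' k0 - (l k0 + 1) + ∑ k ∈ Finset.univ.erase k0, (l' k - l k)
          = ∑ k, (l' k - Function.update l k0 (l k0 + 1) k) := hb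
      omega
    calc _ ≤ _ := step_real φ hφ k0 l (fun k => le_trans (hll' k) (hl'm k))
                    (lt_of_lt_of_le hk0 (hl'm k0))
      _ ≤ _ := ih _ h1 h2
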